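/- Let N be a finite connected graph. Then the graph obtained from N by contracting each blob to a single node (i.e., removing all edges of each blob and identifying all of its nodes) is a tree, i.e., it is connected and has no cycles. -/

import Mathlib

/-!
# Common framework

Finite directed multigraphs, undirected connectivity, numbers of connected
components, cut edges, subgraphs, blobs, blobs determined by leaf sets,
B-quartets, and quartets displayed via cut-edge separation.

A *network* is modelled as a finite directed multigraph (edge directions are
simply ignored for the undirected notions of connectivity, cut edges and
blobs).
-/

/-- A finite directed multigraph: finite types of nodes and of edges, with
source and target maps. -/
structure MDigraph where
  V : Type
  E : Type
  finV : Finite V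
  finE : Finite E
  src : E → V
  tgt : E → V

attribute [instance] MDigraph.finV MDigraph.finE

namespace MDigraph

section Basic

variable (G : MDigraph)

/-- One undirected step between `u` and `v` along an edge from the set `F`. -/
def Step (F : Set G.E) (u v : G.V) : Prop :=
  ∃ e ∈ F, (G.src e = u ∧ G.tgt e = v) ∨ (G.src e = v ∧ G.tgt e = u)

/-- Undirected reachability (an undirected path) using only edges in `F`. -/
def Conn (F : Set G.E) (u v : G.V) : Prop :=
  Relation.ReflTransGen (G.Step F) u v

/-- One directed step from `u` to `v` along an edge from the set `F`. -/
def DStep (F : Set G.E) (u v : G.V) : Prop :=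
  ∃ e ∈ F, G.src e = u ∧ G.tgt e = v

/-- Directed reachability (a directed path) using only edges in `F`. -/
def DConn (F : Set G.E) (u v : G.V) : Prop :=
  Relation.ReflTransGen (G.DStep F) u v

/-- `u` is above (ancestral to) `v`: there is a directed path from `u` to `v`. -/
def Above (u v : G.V) : Prop := G.DConn Set.univ u v

/-- In-degree of a node. -/
noncomputable def inDeg (v : G.V) : ℕ := Nat.card {e : G.E // G.tgt e = v}

/-- Out-degree of a node. -/
noncomputable def outDeg (v : G.V) : ℕ := Nat.card {e : G.E // G.src e = v}

/-- Undirected degree of a node (a loop counts twice). -/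
noncomputable def degree (v : G.V) : ℕ := G.inDeg v + G.outDeg v

/-- The number of connected components of the graph with node set `W` and edge
set the restriction to `W` of `F` (two nodes of `W` lie in the same connected
component iff they are joined by an undirected path). -/
noncomputable def numComponents (W : Set G.V) (F : Set G.E) : ℕ :=
  Nat.card (Quot (fun u v : W => G.Step {e ∈ F | G.src e ∈ W ∧ G.tgt e ∈ W} u.1 v.1))

/-- `v` lies on every directed path from `u` to `w`: there is no directed path
from `u` to `w` all of whose nodes avoid `v`. -/
def OnEveryPath (v u w : G.V) : Prop :=
  ¬ (u ≠ v ∧ w ≠ v ∧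
      Relation.ReflTransGen (fun a b => G.DStep Set.univ a b ∧ a ≠ v ∧ b ≠ v) u w)

end Basic

/-- A subgraph (subnetwork): a set of nodes together with a set of edges
joining them. -/
structure Subgraph (G : MDigraph) where
  verts : Set G.V
  edges : Set G.E
  src_mem : ∀ e ∈ edges, G.src e ∈ verts
  tgt_mem : ∀ e ∈ edges, G.tgt e ∈ verts

/-- The whole graph, as a subgraph of itself. -/
def top (G : MDigraph) : Subgraph G :=
  ⟨Set.univ, Set.univ, fun _ _ => Set.mem_univ _, fun _ _ => Set.mem_univ _⟩

namespace Subgraph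

variable {G : MDigraph}

/-- Containment of subgraphs. -/
def le (H K : Subgraph G) : Prop := H.verts ⊆ K.verts ∧ H.edges ⊆ K.edges

/-- The subgraph `H` is connected. -/
def IsConnected (H : Subgraph G) : Prop :=
  H.verts.Nonempty ∧ ∀ u ∈ H.verts, ∀ v ∈ H.verts, G.Conn H.edges u v

/-- Delete an edge from a subgraph. -/
def deleteEdge (H : Subgraph G) (e : G.E) : Subgraph G :=
  ⟨H.verts, H.edges \ {e}, fun e' he' => H.src_mem e' he'.1,
    fun e' he' => H.tgt_mem e' he'.1⟩

/-- The number of connected components of a subgraph. -/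
noncomputable def numComponents (H : Subgraph G) : ℕ :=
  G.numComponents H.verts H.edges

/-- `e` is a cut edge of the (sub)graph `H`: deleting it increases the number
of connected components. -/
def IsCutEdge (H : Subgraph G) (e : G.E) : Prop :=
  e ∈ H.edges ∧ H.numComponents < (H.deleteEdge e).numComponents

end Subgraph

variable {G : MDigraph}

/-- `B` is a blob of the network `H`: a maximal connected subnetwork of `H`
having no cut edges.  (A blob is *trivial* if it consists of a single node.) -/
def IsBlobIn (H B : Subgraph G) : Prop :=
  B.le H ∧ B.IsConnected ∧ (∀ e, ¬ B.IsCutEdge e) ∧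
    ∀ B' : Subgraph G, B'.le H → B'.IsConnected → (∀ e, ¬ B'.IsCutEdge e) →
      B.le B' → B'.le B

/-- `e` is a cut edge of the network `H` incident to the blob `B`: exactly one
of its endpoints is a node of `B`. -/
def IncidentCut (H B : Subgraph G) (e : G.E) : Prop :=
  H.IsCutEdge e ∧ Xor' (G.src e ∈ B.verts) (G.tgt e ∈ B.verts)

/-- The blob `B` of the network `H` is determined by the set `S` of leaf
labels: deletion of the cut edges of `H` incident to `B` leaves the nodes
labelled by the elements of `S` in distinct connected components. -/
def DeterminesIn {X : Type} (H B : Subgraph G) (leaf : X → G.V) (S : Set X) : Prop :=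
  ∀ s ∈ S, ∀ t ∈ S, s ≠ t →
    ¬ G.Conn {e ∈ H.edges | ¬ IncidentCut H B e} (leaf s) (leaf t)

/-- Four taxa form a B-quartet on the network `H`: some blob of `H` is
determined by them. -/
def BQuartetIn {X : Type} (H : Subgraph G) (leaf : X → G.V) (a b c d : X) : Prop :=
  ∃ B : Subgraph G, IsBlobIn H B ∧ DeterminesIn H B leaf ({a, b, c, d} : Set X)

/-- Some cut edge of `H` separates the taxa `p, q` from the taxa `r, s`: after
its deletion `p, q` lie in one connected component and `r, s` in another.  For
a 4-taxon set `{p,q,r,s}` this says exactly that the (reduced unrooted) tree of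
blobs of `H` displays the resolved quartet `pq|rs` (the edges of the tree of
blobs correspond exactly to the cut edges of the network, and suppressing
degree-2 nodes or contracting blobs does not affect which taxa a cut edge
separates). -/
def CutSep {X : Type} (H : Subgraph G) (leaf : X → G.V) (p q r s : X) : Prop :=
  ∃ e, H.IsCutEdge e ∧
    G.Conn (H.edges \ {e}) (leaf p) (leaf q) ∧
    G.Conn (H.edges \ {e}) (leaf r) (leaf s) ∧
    ¬ G.Conn (H.edges \ {e}) (leaf p) (leaf r)

end MDigraph

open MDigraph

/-- The tree of blobs of `G`: the graph obtained by contracting each blob of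
`G` to a single node, i.e. by removing all of each blob's edges and
identifying all of its nodes.  Two nodes lie in the same blob exactly when
they are joined by a path of non-cut edges, so the node set is the quotient of
`G.V` identifying nodes joined by non-cut edges, and the remaining edges are
precisely the cut edges of `G`. -/
noncomputable def blobContraction (G : MDigraph) : MDigraph where
  V := Quot (G.Step {e | ¬ (top G).IsCutEdge e})
  E := {e : G.E // (top G).IsCutEdge e}
  finV := Finite.of_surjective (Quot.mk _) Quot.exists_rep
  finE := inferInstance
  src := fun e => Quot.mk _ (G.src e.1)
  tgt := fun e => Quot.mk _ (G.tgt e.1)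

section Aux

variable {G : MDigraph}

theorem step_symm {F : Set G.E} {u v : G.V} (h : G.Step F u v) : G.Step F v u := by
  obtain ⟨e, he, h⟩ := h
  exact ⟨e, he, h.symm⟩

theorem conn_symm {F : Set G.E} {u v : G.V} (h : G.Conn F u v) : G.Conn F v u :=
  (@Relation.ReflTransGen.symmetric _ (G.Step F) ⟨fun _ _ => step_symm⟩).symm _ _ h

theorem conn_mono {F F' : Set G.E} (hFF : F ⊆ F') {u v : G.V} (h : G.Conn F u v) :
    G.Conn F' u v :=
  Relation.ReflTransGen.mono (r := G.Step F) (p := G.Step F') (fun _ _ ⟨e, he, hor⟩ => ⟨e, hFF he, hor⟩) _ _ h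

theorem conn_of_eqvGen {F : Set G.E} {u v : G.V}
    (h : Relation.EqvGen (G.Step F) u v) : G.Conn F u v := by
  induction h with
  | rel a b hab => exact Relation.ReflTransGen.single hab
  | refl a => exact Relation.ReflTransGen.refl
  | symm a b _ ih => exact conn_symm ih
  | trans a b c _ _ ih1 ih2 => exact ih1.trans ih2

/-- If the endpoints of `e` are joined by a path avoiding `e`, then `e` is not
a cut edge of the whole graph. -/
theorem not_cutEdge_of_conn (e : G.E)
    (h : G.Conn (Set.univ \ {e}) (G.src e) (G.tgt e)) :
    ¬ (top G).IsCutEdge e := by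
  rintro ⟨-, hlt⟩
  set W : Set G.V := Set.univ with hW
  -- the two relations appearing in the two `numComponents`
  set r1 : W → W → Prop := fun u v =>
    G.Step {e' ∈ (Set.univ : Set G.E) | G.src e' ∈ W ∧ G.tgt e' ∈ W} u.1 v.1 with hr1
  set r2 : W → W → Prop := fun u v =>
    G.Step {e' ∈ (Set.univ \ {e} : Set G.E) | G.src e' ∈ W ∧ G.tgt e' ∈ W} u.1 v.1 with hr2
  have hset2 : {e' ∈ (Set.univ \ {e} : Set G.E) | G.src e' ∈ W ∧ G.tgt e' ∈ W}
      = (Set.univ \ {e} : Set G.E) := by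
    ext e'; simp [hW]
  -- a path avoiding `e` gives equality in the `r2`-quotient
  have quotconn : ∀ a b : G.V, G.Conn (Set.univ \ {e}) a b →
      Quot.mk r2 ⟨a, trivial⟩ = Quot.mk r2 ⟨b, trivial⟩ := by
    intro a b hab
    induction hab with
    | refl => rfl
    | tail _ hstep ih =>
        refine ih.trans (Quot.sound ?_)
        rw [hr2, hset2]; exact hstep
  -- map from the full quotient to the reduced quotient
  have gsound : ∀ u v : W, r1 u v → Quot.mk r2 u = Quot.mk r2 v := by
    rintro u v ⟨e', he', hor⟩
    by_cases hee : e' = e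
    · subst hee
      have hu : (⟨u.1, trivial⟩ : W) = u := Subtype.ext rfl
      have hv : (⟨v.1, trivial⟩ : W) = v := Subtype.ext rfl
      rcases hor with ⟨h1, h2⟩ | ⟨h1, h2⟩
      · rw [← hu, ← hv]; rw [h1, h2] at h; exact quotconn _ _ h
      · rw [← hu, ← hv]; rw [h1, h2] at h; exact quotconn _ _ (conn_symm h)
    · exact Quot.sound ⟨e', ⟨⟨trivial, hee⟩, he'.2⟩, hor⟩
  have fsound : ∀ u v : W, r2 u v → Quot.mk r1 u = Quot.mk r1 v := by
    rintro u v ⟨e', he', hor⟩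
    exact Quot.sound ⟨e', ⟨trivial, he'.2⟩, hor⟩
  have hcard : Nat.card (Quot r1) = Nat.card (Quot r2) := by
    refine Nat.card_congr ⟨Quot.lift (Quot.mk r2) gsound, Quot.lift (Quot.mk r1) fsound,
      ?_, ?_⟩
    · intro q; induction q using Quot.ind with | _ a => rfl
    · intro q; induction q using Quot.ind with | _ a => rfl
  have h1 : (top G).numComponents = Nat.card (Quot r1) := rfl
  have h2 : ((top G).deleteEdge e).numComponents = Nat.card (Quot r2) := rfl
  rw [h1, h2, hcard] at hlt
  exact lt_irrefl _ hlt

/-- Nodes identified in the blob contraction are joined by a path of non-cut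
edges. -/
theorem conn_of_quot_eq {a b : G.V}
    (h : Quot.mk (G.Step {e | ¬ (top G).IsCutEdge e}) a = Quot.mk _ b) :
    G.Conn {e | ¬ (top G).IsCutEdge e} a b :=
  conn_of_eqvGen (Quot.eq.mp h)

theorem noncut_subset {e0 : G.E} (h0 : (top G).IsCutEdge e0) :
    {e | ¬ (top G).IsCutEdge e} ⊆ (Set.univ \ {e0} : Set G.E) := by
  intro e' he'
  exact ⟨trivial, fun hmem => he' (by rwa [Set.mem_singleton_iff.mp hmem])⟩

/-- A path in the blob contraction avoiding a cut edge `e0` lifts to a path in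
`G` avoiding `e0`. -/
theorem lower_conn {e0 : G.E} (h0 : (top G).IsCutEdge e0)
    {x y : (blobContraction G).V}
    (h : (blobContraction G).Conn
      (Set.univ \ {(⟨e0, h0⟩ : {e : G.E // (top G).IsCutEdge e})}) x y) :
    ∀ a b : G.V, Quot.mk _ a = x → Quot.mk _ b = y → G.Conn (Set.univ \ {e0}) a b := by
  induction h with
  | refl =>
      intro a b ha hb
      exact conn_mono (noncut_subset h0) (conn_of_quot_eq (ha.trans hb.symm))
  | tail _ hstep ih =>
      intro a b ha hb
      obtain ⟨ee, heemem, hor⟩ := hstep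
      have hne : ee.1 ≠ e0 := by
        intro hh
        have : ee = (⟨e0, h0⟩ : {e : G.E // (top G).IsCutEdge e}) := Subtype.ext hh
        exact heemem.2 (Set.mem_singleton_iff.mpr this)
      have hmem : ee.1 ∈ (Set.univ \ {e0} : Set G.E) := ⟨trivial, hne⟩
      rcases hor with ⟨h1, h2⟩ | ⟨h1, h2⟩
      · have hma : G.Conn (Set.univ \ {e0}) a (G.src ee.1) := ih a (G.src ee.1) ha h1
        have hmb : G.Conn (Set.univ \ {e0}) (G.tgt ee.1) b :=
          conn_mono (noncut_subset h0) (conn_of_quot_eq (h2.trans hb.symm))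
        exact (hma.tail ⟨ee.1, hmem, Or.inl ⟨rfl, rfl⟩⟩).trans hmb
      · have hma : G.Conn (Set.univ \ {e0}) a (G.tgt ee.1) := ih a (G.tgt ee.1) ha h2
        have hmb : G.Conn (Set.univ \ {e0}) (G.src ee.1) b :=
          conn_mono (noncut_subset h0) (conn_of_quot_eq (h1.trans hb.symm))
        exact (hma.tail ⟨ee.1, hmem, Or.inr ⟨rfl, rfl⟩⟩).trans hmb

/-- A path in `G` projects to a path in the blob contraction. -/
theorem lift_conn {a b : G.V} (h : G.Conn Set.univ a b) :
    (blobContraction G).Conn Set.univ (Quot.mk _ a) (Quot.mk _ b) := by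
  induction h with
  | refl => exact Relation.ReflTransGen.refl
  | tail _ hstep ih =>
      obtain ⟨e, -, hor⟩ := hstep
      by_cases hc : (top G).IsCutEdge e
      · refine ih.tail ⟨⟨e, hc⟩, trivial, ?_⟩
        rcases hor with ⟨h1, h2⟩ | ⟨h1, h2⟩
        · exact Or.inl ⟨congrArg (Quot.mk _) h1, congrArg (Quot.mk _) h2⟩
        · exact Or.inr ⟨congrArg (Quot.mk _) h1, congrArg (Quot.mk _) h2⟩
      · have : Quot.mk (G.Step {e | ¬ (top G).IsCutEdge e}) _ = Quot.mk _ _ :=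
          Quot.sound ⟨e, hc, hor⟩
        rwa [← this]

end Aux

/-- Let `N` (here `G`) be a finite connected graph.  Then
the graph obtained from `G` by contracting each blob to a single node is a
tree: it is connected and has no cycles.  (A finite multigraph has no cycles
iff no edge has its two endpoints joined by a path avoiding that edge,
i.e. iff every edge is a cut edge.) -/
theorem stmt_6 (G : MDigraph) (hconn : ∀ u v, G.Conn Set.univ u v) :
    (∀ u v, (blobContraction G).Conn Set.univ u v) ∧
    (∀ e, ¬ (blobContraction G).Conn (Set.univ \ {e})
        ((blobContraction G).src e) ((blobContraction G).tgt e)) := by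
  constructor
  · intro u v
    obtain ⟨a, ha⟩ := Quot.exists_rep u
    obtain ⟨b, hb⟩ := Quot.exists_rep v
    rw [← ha, ← hb]
    exact lift_conn (hconn a b)
  · rintro ⟨e0, h0⟩ hc
    exact not_cutEdge_of_conn e0 (lower_conn h0 hc (G.src e0) (G.tgt e0) rfl rfl) h0
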